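/- The family (C_a), indexed by the Finsets a ⊆ Ω° (where Ω := Finset.univ), is an F-basis of the center Z(T) of the Terwilliger F-algebra T; in particular the F-dimension of Z(T) equals 2^(n₂). -/

import Mathlib

open Matrix Finset
open scoped Classical

set_option synthInstance.maxHeartbeats 1000000
set_option maxHeartbeats 2000000

noncomputable section

variable {n : ℕ}

/-- The disagreement set of two tuples. -/
def dis {U : Fin n → Type} [∀ i, DecidableEq (U i)] (x y : ∀ i, U i) : Finset (Fin n) :=
  Finset.univ.filter fun i => x i ≠ y i

/-- `S° = {i ∈ S | 2 < |U i|}`. -/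
def circ (U : Fin n → Type) [∀ i, Fintype (U i)] (S : Finset (Fin n)) : Finset (Fin n) :=
  S.filter fun i => 2 < Fintype.card (U i)

/-- The valency `k_S`. -/
def val (U : Fin n → Type) [∀ i, Fintype (U i)] (S : Finset (Fin n)) : ℕ :=
  ∏ i ∈ S, (Fintype.card (U i) - 1)

variable (U : Fin n → Type) [∀ i, Fintype (U i)] [∀ i, DecidableEq (U i)]
variable (F : Type) [Field F]

/-- The adjacency matrix `A_S`. -/
def Amat (S : Finset (Fin n)) : Matrix (∀ i, U i) (∀ i, U i) F :=
  Matrix.of fun x y => if dis x y = S then 1 else 0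

/-- The dual idempotent `E_S^*(x₀)`. -/
def Emat (x₀ : ∀ i, U i) (S : Finset (Fin n)) : Matrix (∀ i, U i) (∀ i, U i) F :=
  Matrix.diagonal fun y => if dis x₀ y = S then 1 else 0

/-- The Terwilliger `F`-algebra of the factorial scheme with respect to the base point `x₀`:
the subalgebra of `Matrix X X F` generated by the adjacency matrices and dual idempotents. -/
def Tw (x₀ : ∀ i, U i) : Subalgebra F (Matrix (∀ i, U i) (∀ i, U i) F) :=
  Algebra.adjoin F ({M | ∃ S, M = Amat U F S} ∪ {M | ∃ S, M = Emat U F x₀ S})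

/-- `B_{g,h,i} = ∑_{g △ i ⊆ j ⊆ h} E_g A_j E_i`. -/
def Bmat (x₀ : ∀ i, U i) (g h i : Finset (Fin n)) : Matrix (∀ i, U i) (∀ i, U i) F :=
  ∑ j ∈ Finset.univ.filter (fun j => symmDiff g i ⊆ j ∧ j ⊆ h),
    Emat U F x₀ g * Amat U F j * Emat U F x₀ i

/-- `C_g = ∑_h k_{g \ h} • B_{h, g ∩ h, h}`. -/
def Cmat (x₀ : ∀ i, U i) (g : Finset (Fin n)) : Matrix (∀ i, U i) (∀ i, U i) F :=
  ∑ h : Finset (Fin n), ((val U (g \ h) : ℕ) : F) • Bmat U F x₀ h (g ∩ h) h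

/-- `n₂ = |{i | 2 < card (U i)}|`. -/
def nTwo : ℕ := (Finset.univ.filter fun i : Fin n => 2 < Fintype.card (U i)).card


set_option linter.unusedSectionVars false
set_option linter.unusedVariables false

section DisHelpers
variable {U : Fin n → Type} [∀ i, Fintype (U i)] [∀ i, DecidableEq (U i)]
variable {F : Type} [Field F]

lemma mem_dis {x y : ∀ i, U i} {i : Fin n} : i ∈ dis x y ↔ x i ≠ y i := by
  simp [dis]

lemma dis_self (x : ∀ i, U i) : dis x x = ∅ := by ext i; simp [mem_dis]

lemma dis_eq_empty_iff {x y : ∀ i, U i} : dis x y = ∅ ↔ x = y := by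
  constructor
  · intro h; funext i
    by_contra hne
    exact (Finset.eq_empty_iff_forall_notMem.mp h i) (mem_dis.mpr hne)
  · rintro rfl; exact dis_self x

lemma coord_iff {x y x' y' : ∀ i, U i} (h : dis x y = dis x' y') (i : Fin n) :
    x i = y i ↔ x' i = y' i := by
  have := Finset.ext_iff.mp h i
  simp only [mem_dis] at this
  exact not_iff_not.mp this

/-- Extend a partial matching of three points to a permutation. -/
lemma swap3 {V : Type} [DecidableEq V] {p a b a' b' : V}
    (h1 : a = p ↔ a' = p) (h2 : b = p ↔ b' = p) (h3 : a = b ↔ a' = b') :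
    ∃ e : Equiv.Perm V, e p = p ∧ e a = a' ∧ e b = b' := by
  classical
  set e1 := Equiv.swap a a' with he1
  have he1a : e1 a = a' := Equiv.swap_apply_left a a'
  have hp1 : e1 p = p := by
    by_cases hap : a = p
    · have hap' : a' = p := h1.mp hap
      rw [he1, hap, hap', Equiv.swap_self]; rfl
    · exact Equiv.swap_apply_of_ne_of_ne (fun h => hap h.symm)
        (fun h => (h1.not.mp hap) h.symm)
  set e2 := Equiv.swap (e1 b) b' with he2
  refine ⟨e1.trans e2, ?_, ?_, ?_⟩
  · show e2 (e1 p) = p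
    rw [hp1]
    by_cases hbp : b = p
    · have hbp' : b' = p := h2.mp hbp
      rw [he2, hbp, hp1, hbp', Equiv.swap_self]; rfl
    · have h1b : e1 b ≠ p := by
        intro h; exact hbp (e1.injective (h.trans hp1.symm))
      exact Equiv.swap_apply_of_ne_of_ne (fun h => h1b h.symm)
        (fun h => (h2.not.mp hbp) h.symm)
  · show e2 (e1 a) = a'
    rw [he1a]
    by_cases hc : e1 b = a'
    · have hab : a = b := e1.injective (he1a.trans hc.symm)
      have hab' : a' = b' := h3.mp hab
      rw [he2, hc, hab', Equiv.swap_self]; rfl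
    · have hc2 : a' ≠ b' := by
        intro h; exact hc (by rw [← h3.mpr h, he1a])
      exact Equiv.swap_apply_of_ne_of_ne (fun h => hc h.symm) hc2
  · show e2 (e1 b) = b'
    exact Equiv.swap_apply_left _ _

variable {F : Type} [Field F]

/-- Invariance: entries depend only on the triple of disagreement sets. -/
def DisInv (x₀ : ∀ i, U i) (M : Matrix (∀ i, U i) (∀ i, U i) F) : Prop :=
  ∀ x y x' y' : ∀ i, U i, dis x₀ x = dis x₀ x' → dis x₀ y = dis x₀ y' →
    dis x y = dis x' y' → M x y = M x' y'

lemma DisInv.mul {x₀ : ∀ i, U i} {M N : Matrix (∀ i, U i) (∀ i, U i) F}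
    (hM : DisInv x₀ M) (hN : DisInv x₀ N) : DisInv x₀ (M * N) := by
  intro x y x' y' hx hy hxy
  have key : ∀ i : Fin n, ∃ e : Equiv.Perm (U i),
      e (x₀ i) = x₀ i ∧ e (x i) = x' i ∧ e (y i) = y' i := by
    intro i
    exact swap3 (by rw [eq_comm, coord_iff hx i, eq_comm])
      (by rw [eq_comm, coord_iff hy i, eq_comm]) (coord_iff hxy i)
  choose e he0 heA heB using key
  set σ : (∀ i, U i) ≃ (∀ i, U i) := Equiv.piCongrRight e with hσ
  have hσz : ∀ z i, σ z i = e i (z i) := fun z i => rfl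
  have hdis0 : ∀ z, dis x₀ (σ z) = dis x₀ z := by
    intro z; ext i
    simp only [mem_dis, hσz]
    rw [not_iff_not]
    conv_lhs => rw [← he0 i]
    exact (e i).apply_eq_iff_eq
  have hdisx : ∀ z, dis x' (σ z) = dis x z := by
    intro z; ext i
    simp only [mem_dis, hσz]
    rw [not_iff_not]
    conv_lhs => rw [← heA i]
    exact (e i).apply_eq_iff_eq
  have hdisy : ∀ z, dis (σ z) y' = dis z y := by
    intro z; ext i
    simp only [mem_dis, hσz]
    rw [not_iff_not]
    conv_lhs => rw [← heB i]
    exact (e i).apply_eq_iff_eq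
  rw [Matrix.mul_apply, Matrix.mul_apply]
  rw [← Equiv.sum_comp σ (fun z => M x' z * N z y')]
  apply Finset.sum_congr rfl
  intro z _
  congr 1
  · exact hM x z x' (σ z) hx (hdis0 z).symm (hdisx z).symm
  · exact hN z y (σ z) y' (hdis0 z).symm hy (hdisy z).symm

end DisHelpers

section count
variable {V : Type} [Fintype V] [DecidableEq V]

lemma cardOne {pred : V → Prop} [DecidablePred pred] {c : V}
    (h : ∀ u, pred u ↔ u = c) : (univ.filter pred).card = 1 := by
  rw [show univ.filter pred = {c} by ext u; simp [h]]; simp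

lemma cardZero {pred : V → Prop} [DecidablePred pred]
    (h : ∀ u, ¬ pred u) : (univ.filter pred).card = 0 := by
  rw [show univ.filter pred = ∅ by ext u; simp [h]]; simp

lemma cardNe {pred : V → Prop} [DecidablePred pred] {p : V}
    (h : ∀ u, pred u ↔ u ≠ p) : (univ.filter pred).card = Fintype.card V - 1 := by
  rw [show univ.filter pred = univ.erase p by ext u; simp [h, Finset.mem_erase]]
  rw [Finset.card_erase_of_mem (mem_univ p), Finset.card_univ]

lemma cardNeNe {pred : V → Prop} [DecidablePred pred] {p b : V} (hpb : p ≠ b)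
    (h : ∀ u, pred u ↔ (u ≠ p ∧ u ≠ b)) :
    (univ.filter pred).card = Fintype.card V - 2 := by
  rw [show univ.filter pred = univ \ {p, b} by ext u; simp [h, not_or]]
  rw [Finset.card_sdiff_of_subset (Finset.subset_univ _), Finset.card_univ, Finset.card_pair hpb]

/-- The per-coordinate counting identity. -/
lemma coordKey (A S : Prop) [Decidable A] [Decidable S] (p a b : V) :
    (if A ∧ p = a then Fintype.card V - 1 else 1) *
      (univ.filter fun u => ((p ≠ a) ↔ (p ≠ u)) ∧ ((a ≠ u) → (A ∧ p ≠ a)) ∧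
        ((u ≠ b) ↔ S)).card =
    (if A ∧ p = b then Fintype.card V - 1 else 1) *
      (univ.filter fun u => ((p ≠ b) ↔ (p ≠ u)) ∧ ((u ≠ b) → (A ∧ p ≠ b)) ∧
        ((a ≠ u) ↔ S)).card := by
  by_cases hA' : A
  · by_cases hpa : p = a <;> by_cases hpb : p = b
    · -- p = a = b
      subst hpa; subst hpb
      rw [if_pos ⟨hA', rfl⟩]
      congr 1
      by_cases hS : S
      · rw [cardZero (fun u => ?_), cardZero (fun u => ?_)]
        · rintro ⟨h1, -, h3⟩
          exact (h3.mpr hS) (not_not.mp (fun h => (h1.mpr h) rfl))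
        · rintro ⟨h1, -, h3⟩
          exact (h3.mpr hS) (not_not.mp (fun h => (h1.mpr h) rfl)).symm
      · rw [cardOne (c := p) (fun u => ?_), cardOne (c := p) (fun u => ?_)]
        · constructor
          · rintro ⟨h1, -, -⟩
            exact (not_not.mp (fun h => (h1.mpr h) rfl)).symm
          · rintro rfl
            exact ⟨Iff.rfl, fun h => absurd rfl h, ⟨fun h => absurd rfl h, fun hs => absurd hs hS⟩⟩
        · constructor
          · rintro ⟨h1, -, -⟩
            exact (not_not.mp (fun h => (h1.mpr h) rfl)).symm
          · rintro rfl
            exact ⟨Iff.rfl, fun h => absurd rfl h, ⟨fun h => absurd rfl h, fun hs => absurd hs hS⟩⟩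
    · -- p = a, p ≠ b
      subst hpa
      rw [if_pos ⟨hA', rfl⟩, if_neg (fun h => hpb h.2), one_mul]
      by_cases hS : S
      · rw [cardOne (c := p) (fun u => ?_), cardNe (p := p) (fun u => ?_), mul_one]
        · -- predR ↔ u ≠ p
          constructor
          · rintro ⟨h1, -, -⟩
            exact fun e => (h1.mp hpb) e.symm
          · intro hu
            exact ⟨⟨fun _ e => hu e.symm, fun _ => hpb⟩, fun _ => ⟨hA', hpb⟩,
              ⟨fun _ => hS, fun _ e => hu e.symm⟩⟩
        · -- predL ↔ u = p
          constructor
          · rintro ⟨h1, -, -⟩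
            exact (not_not.mp (fun h => (h1.mpr h) rfl)).symm
          · rintro rfl
            exact ⟨Iff.rfl, fun h => absurd rfl h, ⟨fun _ => hS, fun _ => hpb⟩⟩
      · rw [cardZero (fun u => ?_), cardZero (fun u => ?_), mul_zero]
        · -- predR false
          rintro ⟨h1, -, h3⟩
          exact (h1.mp hpb) (not_not.mp (fun h => hS (h3.mp h)))
        · -- predL false
          rintro ⟨h1, -, h3⟩
          have hup : u = p := (not_not.mp (fun h => (h1.mpr h) rfl)).symm
          have hub : u = b := not_not.mp (fun hne => hS (h3.mp hne))
          exact hpb (hup.symm.trans hub)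
    · -- p ≠ a, p = b
      subst hpb
      rw [if_neg (fun h => hpa h.2), if_pos ⟨hA', rfl⟩, one_mul]
      by_cases hS : S
      · rw [cardNe (p := p) (fun u => ?_), cardOne (c := p) (fun u => ?_), mul_one]
        · -- predR ↔ u = p
          constructor
          · rintro ⟨h1, -, -⟩
            exact (not_not.mp (fun h => (h1.mpr h) rfl)).symm
          · rintro rfl
            exact ⟨Iff.rfl, fun h => absurd rfl h, ⟨fun _ => hS, fun _ e => hpa e.symm⟩⟩
        · -- predL ↔ u ≠ p
          constructor
          · rintro ⟨h1, -, -⟩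
            exact fun e => (h1.mp hpa) e.symm
          · intro hu
            exact ⟨⟨fun _ e => hu e.symm, fun _ => hpa⟩, fun _ => ⟨hA', hpa⟩,
              ⟨fun _ => hS, fun _ => hu⟩⟩
      · rw [cardZero (fun u => ?_), cardZero (fun u => ?_), mul_zero]
        · -- predR false
          rintro ⟨h1, -, h3⟩
          have hpu : p = u := not_not.mp (fun h => (h1.mpr h) rfl)
          have hau : a = u := not_not.mp (fun hne => hS (h3.mp hne))
          exact hpa (hpu.trans hau.symm)
        · -- predL false
          rintro ⟨h1, -, h3⟩
          have hup : u = p := not_not.mp (fun hne => hS (h3.mp hne))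
          exact (h1.mp hpa) hup.symm
    · -- p ≠ a, p ≠ b
      rw [if_neg (fun h => hpa h.2), if_neg (fun h => hpb h.2), one_mul, one_mul]
      by_cases hS : S
      · rw [cardNeNe (p := p) (b := b) hpb (fun u => ?_),
          cardNeNe (p := p) (b := a) hpa (fun u => ?_)]
        · -- predR ↔ u ≠ p ∧ u ≠ a
          constructor
          · rintro ⟨h1, -, h3⟩
            exact ⟨fun e => (h1.mp hpb) e.symm, fun e => (h3.mpr hS) e.symm⟩
          · rintro ⟨hup, hua⟩
            exact ⟨⟨fun _ e => hup e.symm, fun _ => hpb⟩, fun _ => ⟨hA', hpb⟩,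
              ⟨fun _ => hS, fun _ e => hua e.symm⟩⟩
        · -- predL ↔ u ≠ p ∧ u ≠ b
          constructor
          · rintro ⟨h1, -, h3⟩
            exact ⟨fun e => (h1.mp hpa) e.symm, h3.mpr hS⟩
          · rintro ⟨hup, hub⟩
            exact ⟨⟨fun _ e => hup e.symm, fun _ => hpa⟩, fun _ => ⟨hA', hpa⟩,
              ⟨fun _ => hS, fun _ => hub⟩⟩
      · rw [cardOne (c := b) (fun u => ?_), cardOne (c := a) (fun u => ?_)]
        · -- predR ↔ u = a
          constructor
          · rintro ⟨-, -, h3⟩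
            exact not_not.mp (fun (hne : ¬ u = a) => hS (h3.mp (fun e => hne e.symm)))
          · rintro rfl
            exact ⟨⟨fun _ => hpa, fun _ => hpb⟩, fun _ => ⟨hA', hpb⟩,
              ⟨fun h => absurd rfl h, fun hs => absurd hs hS⟩⟩
        · -- predL ↔ u = b
          constructor
          · rintro ⟨-, -, h3⟩
            exact not_not.mp (fun hne => hS (h3.mp hne))
          · rintro rfl
            exact ⟨⟨fun _ => hpb, fun _ => hpa⟩, fun _ => ⟨hA', hpa⟩,
              ⟨fun h => absurd rfl h, fun hs => absurd hs hS⟩⟩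
  · rw [if_neg (fun h => hA' h.1), if_neg (fun h => hA' h.1), one_mul, one_mul]
    by_cases h3 : ((a : V) ≠ b ↔ S)
    · rw [cardOne (c := a) (fun u => ?_), cardOne (c := b) (fun u => ?_)]
      · -- predR ↔ u = b
        constructor
        · rintro ⟨-, h2, -⟩
          exact not_not.mp (fun hne => hA' (h2 hne).1)
        · rintro rfl
          exact ⟨Iff.rfl, fun h => absurd rfl h, h3⟩
      · -- predL ↔ u = a
        constructor
        · rintro ⟨-, h2, -⟩
          exact not_not.mp (fun (hne : ¬ u = a) => hA' (h2 (fun e => hne e.symm)).1)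
        · rintro rfl
          exact ⟨Iff.rfl, fun h => absurd rfl h, h3⟩
    · rw [cardZero (fun u => ?_), cardZero (fun u => ?_)]
      · -- predR false
        rintro ⟨-, h2, hc⟩
        have : u = b := not_not.mp (fun hne => hA' (h2 hne).1)
        subst this
        exact h3 hc
      · -- predL false
        rintro ⟨-, h2, hc⟩
        have : a = u := not_not.mp (fun hne => hA' (h2 hne).1)
        subst this
        exact h3 hc
end count


section EntryHelpers
variable {U : Fin n → Type} [∀ i, Fintype (U i)] [∀ i, DecidableEq (U i)]
variable {F : Type} [Field F]
variable (x₀ : ∀ i, U i)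

lemma Amat_apply (S : Finset (Fin n)) (x y : ∀ i, U i) :
    Amat U F S x y = if dis x y = S then 1 else 0 := rfl

lemma Emat_apply (S : Finset (Fin n)) (x y : ∀ i, U i) :
    Emat U F x₀ S x y = if x = y then (if dis x₀ y = S then 1 else 0) else 0 := by
  by_cases h : x = y
  · subst h; simp [Emat, Matrix.diagonal_apply_eq]
  · simp [Emat, Matrix.diagonal_apply_ne _ h, h]

lemma EAE_apply (g j i : Finset (Fin n)) (x y : ∀ i, U i) :
    (Emat U F x₀ g * Amat U F j * Emat U F x₀ i) x y =
    (if dis x₀ x = g then 1 else 0) * (if dis x y = j then 1 else 0) *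
      (if dis x₀ y = i then 1 else 0) := by
  simp only [Emat, Matrix.mul_diagonal, Matrix.diagonal_mul, Amat_apply]

lemma Cmat_apply (a : Finset (Fin n)) (x y : ∀ i, U i) :
    Cmat U F x₀ a x y =
      if dis x₀ x = dis x₀ y ∧ dis x y ⊆ a ∩ dis x₀ x
      then ((val U (a \ dis x₀ x) : ℕ) : F) else 0 := by
  unfold Cmat
  rw [Matrix.sum_apply]
  have hterm : ∀ h : Finset (Fin n),
      (((val U (a \ h) : ℕ) : F) • Bmat U F x₀ h (a ∩ h) h) x y =
      (if dis x₀ x = h then 1 else 0) * (if dis x₀ y = h then 1 else 0) *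
        (if dis x y ⊆ a ∩ h then ((val U (a \ h) : ℕ) : F) else 0) := by
    intro h
    rw [Matrix.smul_apply]
    unfold Bmat
    rw [Matrix.sum_apply]
    have : ∀ j ∈ Finset.univ.filter (fun j => symmDiff h h ⊆ j ∧ j ⊆ a ∩ h),
        (Emat U F x₀ h * Amat U F j * Emat U F x₀ h) x y =
        (if dis x₀ x = h then 1 else 0) * (if dis x₀ y = h then 1 else 0) *
          (if dis x y = j then 1 else 0) := by
      intro j _; rw [EAE_apply]; ring
    rw [Finset.sum_congr rfl this, ← Finset.mul_sum, Finset.sum_ite_eq]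
    simp only [Finset.mem_filter, Finset.mem_univ, true_and, symmDiff_self,
      bot_eq_empty, Finset.empty_subset, true_and]
    by_cases hs : dis x y ⊆ a ∩ h <;> simp [hs, mul_comm, mul_assoc, mul_left_comm]
  rw [Finset.sum_congr rfl (fun h _ => hterm h), Finset.sum_eq_single (dis x₀ x)]
  · by_cases h1 : dis x₀ x = dis x₀ y
    · rw [if_pos rfl, if_pos h1.symm]
      by_cases h2 : dis x y ⊆ a ∩ dis x₀ x
      · rw [if_pos h2, if_pos ⟨h1, h2⟩]; ring
      · rw [if_neg h2, if_neg (by tauto)]; ring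
    · rw [if_pos rfl, if_neg (fun e => h1 e.symm)]; simp [h1]
  · intro h _ hne
    rw [if_neg (fun e => hne e.symm)]; ring
  · intro h; exact absurd (Finset.mem_univ _) h





lemma filterL_eq (a S : Finset (Fin n)) (x y : ∀ i, U i) :
    Finset.univ.filter (fun z : ∀ i, U i =>
        dis x₀ x = dis x₀ z ∧ dis x z ⊆ a ∩ dis x₀ x ∧ dis z y = S) =
      Fintype.piFinset (fun i => Finset.univ.filter (fun u : U i =>
        ((x₀ i ≠ x i) ↔ (x₀ i ≠ u)) ∧ ((x i ≠ u) → (i ∈ a ∧ x₀ i ≠ x i)) ∧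
          ((u ≠ y i) ↔ i ∈ S))) := by
  ext z
  simp only [Finset.mem_filter, Finset.mem_univ, true_and, Fintype.mem_piFinset]
  constructor
  · rintro ⟨e1, e2, e3⟩ i
    refine ⟨?_, ?_, ?_⟩
    · have := Finset.ext_iff.mp e1 i; simpa [mem_dis] using this
    · intro hxz
      have : i ∈ a ∩ dis x₀ x := e2 (mem_dis.mpr hxz)
      rw [Finset.mem_inter, mem_dis] at this; exact this
    · have := Finset.ext_iff.mp e3 i; simpa [mem_dis] using this
  · intro h
    refine ⟨?_, ?_, ?_⟩
    · ext i; rw [mem_dis, mem_dis]; exact not_iff_not.mpr (not_iff_not.mp (h i).1)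
    · intro i hi
      rw [mem_dis] at hi
      rw [Finset.mem_inter, mem_dis]
      exact (h i).2.1 hi
    · ext i; rw [mem_dis]; exact (h i).2.2


end EntryHelpers


section CommHelpers
variable {U : Fin n → Type} [∀ i, Fintype (U i)] [∀ i, DecidableEq (U i)]
variable {F : Type} [Field F]
variable (x₀ : ∀ i, U i)

lemma filterR_eq (a S : Finset (Fin n)) (x y : ∀ i, U i) :
    Finset.univ.filter (fun z : ∀ i, U i =>
        dis x₀ y = dis x₀ z ∧ dis z y ⊆ a ∩ dis x₀ y ∧ dis x z = S) =
      Fintype.piFinset (fun i => Finset.univ.filter (fun u : U i =>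
        ((x₀ i ≠ y i) ↔ (x₀ i ≠ u)) ∧ ((u ≠ y i) → (i ∈ a ∧ x₀ i ≠ y i)) ∧
          ((x i ≠ u) ↔ i ∈ S))) := by
  ext z
  simp only [Finset.mem_filter, Finset.mem_univ, true_and, Fintype.mem_piFinset]
  constructor
  · rintro ⟨e1, e2, e3⟩ i
    refine ⟨?_, ?_, ?_⟩
    · have := Finset.ext_iff.mp e1 i; simpa [mem_dis] using this
    · intro hzy
      have : i ∈ a ∩ dis x₀ y := e2 (mem_dis.mpr hzy)
      rw [Finset.mem_inter, mem_dis] at this; exact this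
    · have := Finset.ext_iff.mp e3 i; simpa [mem_dis] using this
  · intro h
    refine ⟨?_, ?_, ?_⟩
    · ext i; rw [mem_dis, mem_dis]; exact (h i).1
    · intro i hi
      rw [mem_dis] at hi
      rw [Finset.mem_inter, mem_dis]
      exact (h i).2.1 hi
    · ext i; rw [mem_dis]; exact (h i).2.2

lemma valcard_eq (a S : Finset (Fin n)) (x y : ∀ i, U i) :
    val U (a \ dis x₀ x) * (Finset.univ.filter (fun z : ∀ i, U i =>
        dis x₀ x = dis x₀ z ∧ dis x z ⊆ a ∩ dis x₀ x ∧ dis z y = S)).card =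
    val U (a \ dis x₀ y) * (Finset.univ.filter (fun z : ∀ i, U i =>
        dis x₀ y = dis x₀ z ∧ dis z y ⊆ a ∩ dis x₀ y ∧ dis x z = S)).card := by
  rw [filterL_eq, filterR_eq, Fintype.card_piFinset, Fintype.card_piFinset]
  have hval : ∀ w : ∀ i, U i, val U (a \ dis x₀ w) =
      ∏ i : Fin n, (if i ∈ a ∧ x₀ i = w i then Fintype.card (U i) - 1 else 1) := by
    intro w
    show (∏ i ∈ a \ dis x₀ w, (Fintype.card (U i) - 1)) = _
    rw [show a \ dis x₀ w = Finset.univ ∩ (a \ dis x₀ w) from (Finset.univ_inter _).symm,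
      ← Finset.prod_ite_mem]
    refine Finset.prod_congr rfl (fun i _ => ?_)
    congr 1
    simp only [eq_iff_iff, Finset.mem_sdiff, mem_dis, not_not]
  rw [hval x, hval y, ← Finset.prod_mul_distrib, ← Finset.prod_mul_distrib]
  exact Finset.prod_congr rfl (fun i _ => coordKey (i ∈ a) (i ∈ S) (x₀ i) (x i) (y i))

lemma Cmat_comm_Amat (a S : Finset (Fin n)) :
    Cmat U F x₀ a * Amat U F S = Amat U F S * Cmat U F x₀ a := by
  ext x y
  rw [Matrix.mul_apply, Matrix.mul_apply]
  have hL : ∀ z, Cmat U F x₀ a x z * Amat U F S z y =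
      if dis x₀ x = dis x₀ z ∧ dis x z ⊆ a ∩ dis x₀ x ∧ dis z y = S
      then ((val U (a \ dis x₀ x) : ℕ) : F) else 0 := by
    intro z
    rw [Cmat_apply, Amat_apply]
    by_cases c1 : dis x₀ x = dis x₀ z ∧ dis x z ⊆ a ∩ dis x₀ x <;>
      by_cases c2 : dis z y = S <;>
      simp [c1, c2, and_assoc] <;> tauto
  have hR : ∀ z, Amat U F S x z * Cmat U F x₀ a z y =
      if dis x₀ y = dis x₀ z ∧ dis z y ⊆ a ∩ dis x₀ y ∧ dis x z = S
      then ((val U (a \ dis x₀ y) : ℕ) : F) else 0 := by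
    intro z
    rw [Cmat_apply, Amat_apply]
    by_cases h : dis x₀ z = dis x₀ y
    · rw [h]
      by_cases hs : dis x z = S <;> by_cases hsub : dis z y ⊆ a ∩ dis x₀ y <;>
        simp [hs, hsub]
    · rw [if_neg (fun (c : dis x₀ z = dis x₀ y ∧ dis z y ⊆ a ∩ dis x₀ z) => h c.1),
        mul_zero, if_neg (fun c => h c.1.symm)]
  rw [Finset.sum_congr rfl (fun z _ => hL z), Finset.sum_congr rfl (fun z _ => hR z),
    ← Finset.sum_filter, ← Finset.sum_filter, Finset.sum_const, Finset.sum_const,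
    nsmul_eq_mul, nsmul_eq_mul, ← Nat.cast_mul, ← Nat.cast_mul]
  congr 1
  rw [mul_comm, valcard_eq x₀ a S x y, mul_comm]

lemma Cmat_comm_Emat (a S : Finset (Fin n)) :
    Cmat U F x₀ a * Emat U F x₀ S = Emat U F x₀ S * Cmat U F x₀ a := by
  ext x y
  unfold Emat
  rw [Matrix.mul_diagonal, Matrix.diagonal_mul]
  by_cases hb : dis x₀ x = dis x₀ y
  · rw [hb, mul_comm]
  · rw [Cmat_apply, if_neg (fun c => hb c.1), zero_mul, mul_zero]

lemma Cmat_mem_Tw (a : Finset (Fin n)) : Cmat U F x₀ a ∈ Tw U F x₀ := by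
  apply Subalgebra.sum_mem
  intro h _
  apply Subalgebra.smul_mem
  apply Subalgebra.sum_mem
  intro j _
  exact mul_mem (mul_mem (Algebra.subset_adjoin (Or.inr ⟨h, rfl⟩))
    (Algebra.subset_adjoin (Or.inl ⟨j, rfl⟩))) (Algebra.subset_adjoin (Or.inr ⟨h, rfl⟩))

lemma eq_iff_of_dis {x y x' y' : ∀ i, U i} (h : dis x y = dis x' y') :
    x = y ↔ x' = y' := by
  rw [← dis_eq_empty_iff, ← dis_eq_empty_iff, h]

lemma disInv_of_mem_Tw {M : Matrix (∀ i, U i) (∀ i, U i) F}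
    (hM : M ∈ Tw U F x₀) : DisInv x₀ M := by
  induction hM using Algebra.adjoin_induction with
  | mem N hN =>
    rcases hN with ⟨S, rfl⟩ | ⟨S, rfl⟩
    · intro x y x' y' h1 h2 h3
      rw [Amat_apply, Amat_apply, h3]
    · intro x y x' y' h1 h2 h3
      rw [Emat_apply, Emat_apply, h2]
      exact if_congr (eq_iff_of_dis h3) rfl rfl
  | algebraMap r =>
    intro x y x' y' h1 h2 h3
    rw [Matrix.algebraMap_matrix_apply, Matrix.algebraMap_matrix_apply]
    exact if_congr (eq_iff_of_dis h3) rfl rfl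
  | add N N' hN hN' ihN ihN' =>
    intro x y x' y' h1 h2 h3
    rw [Matrix.add_apply, Matrix.add_apply, ihN x y x' y' h1 h2 h3, ihN' x y x' y' h1 h2 h3]
  | mul N N' hN hN' ihN ihN' =>
    exact DisInv.mul ihN ihN'
end CommHelpers


section RepHelpers
variable {U : Fin n → Type} [∀ i, Fintype (U i)] [∀ i, DecidableEq (U i)]
variable {F : Type} [Field F]
variable (x₀ : ∀ i, U i)

lemma exists_uv (hU : ∀ i, 2 ≤ Fintype.card (U i)) :
    ∃ u v : ∀ i, U i, (∀ i, u i ≠ x₀ i) ∧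
      (∀ i, 2 < Fintype.card (U i) → (v i ≠ x₀ i ∧ v i ≠ u i)) := by
  have h1 : ∀ i, ∃ w : U i, w ≠ x₀ i := by
    intro i
    have : Nontrivial (U i) := Fintype.one_lt_card_iff_nontrivial.mp (by have := hU i; omega)
    exact exists_ne (x₀ i)
  choose u hu using h1
  have h2 : ∀ i, ∃ w : U i, 2 < Fintype.card (U i) → (w ≠ x₀ i ∧ w ≠ u i) := by
    intro i
    by_cases hc : 2 < Fintype.card (U i)
    · have hne : (({x₀ i, u i} : Finset (U i))ᶜ).Nonempty := by
        apply Finset.card_pos.mp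
        rw [Finset.card_compl]
        have h2' : ({x₀ i, u i} : Finset (U i)).card ≤ 2 :=
          (Finset.card_insert_le _ _).trans (by simp)
        omega
      obtain ⟨w, hw⟩ := hne
      rw [Finset.mem_compl, Finset.mem_insert, Finset.mem_singleton] at hw
      push_neg at hw
      exact ⟨w, fun _ => hw⟩
    · exact ⟨u i, fun h => absurd h hc⟩
  choose v hv using h2
  exact ⟨u, v, hu, hv⟩

lemma dis_subset_circ {x y : ∀ i, U i} (h : dis x₀ x = dis x₀ y) :
    dis x y ⊆ circ U (dis x₀ x) := by
  intro i hi
  rw [mem_dis] at hi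
  have hx : x i ≠ x₀ i := by
    intro he
    have hy : y i = x₀ i := by
      have := Finset.ext_iff.mp h i
      rw [mem_dis, mem_dis] at this
      by_contra hy
      exact (he ▸ (this.mpr (fun hc => hy hc.symm)) : x₀ i ≠ x i) he.symm
    exact hi (he.trans hy.symm)
  have hy : y i ≠ x₀ i := by
    intro he
    have := Finset.ext_iff.mp h i
    rw [mem_dis, mem_dis] at this
    exact (this.mp (fun hc => hx hc.symm)) he.symm
  rw [circ, Finset.mem_filter, mem_dis]
  refine ⟨fun hc => hx hc.symm, ?_⟩
  have : ({x₀ i, x i, y i} : Finset (U i)).card = 3 := by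
    rw [Finset.card_insert_of_notMem (by simp [Ne.symm hx, Ne.symm hy]),
      Finset.card_insert_of_notMem (by simp [hi]), Finset.card_singleton]
  calc 2 < 3 := by norm_num
    _ = ({x₀ i, x i, y i} : Finset (U i)).card := this.symm
    _ ≤ Fintype.card (U i) := Finset.card_le_univ _

/-- Representative points realising a given pair of disagreement data. -/
lemma rep_dis (u v : ∀ i, U i) (hu : ∀ i, u i ≠ x₀ i)
    (hv : ∀ i, 2 < Fintype.card (U i) → (v i ≠ x₀ i ∧ v i ≠ u i))
    (h j : Finset (Fin n)) (hj : j ⊆ circ U h) :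
    dis x₀ (fun i => if i ∈ h then u i else x₀ i) = h ∧
    dis x₀ (fun i => if i ∈ j then v i else if i ∈ h then u i else x₀ i) = h ∧
    dis (fun i => if i ∈ h then u i else x₀ i)
      (fun i => if i ∈ j then v i else if i ∈ h then u i else x₀ i) = j := by
  have hjh : ∀ i ∈ j, i ∈ h ∧ 2 < Fintype.card (U i) := by
    intro i hi
    have := hj hi
    rw [circ, Finset.mem_filter] at this
    exact this
  refine ⟨?_, ?_, ?_⟩
  · ext i
    rw [mem_dis]
    by_cases hih : i ∈ h
    · simp only [if_pos hih, hih, iff_true]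
      exact fun he => hu i he.symm
    · simp [hih]
  · ext i
    rw [mem_dis]
    by_cases hij : i ∈ j
    · obtain ⟨h1c, h2c⟩ := hjh i hij
      simp only [if_pos hij, h1c, iff_true]
      exact fun he => (hv i h2c).1 he.symm
    · by_cases hih : i ∈ h
      · simp only [if_neg hij, if_pos hih, hih, iff_true]
        exact fun he => hu i he.symm
      · simp [hij, hih]
  · ext i
    rw [mem_dis]
    by_cases hij : i ∈ j
    · obtain ⟨h1c, h2c⟩ := hjh i hij
      simp only [if_pos hij, if_pos h1c, hij, iff_true]
      exact fun he => (hv i h2c).2 he.symm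
    · by_cases hih : i ∈ h <;> simp [hij, hih]
end RepHelpers

section Moebius
variable {F : Type} [Field F]

lemma moebius_sum (s j : Finset (Fin n)) (hj : j ⊆ s) (g : Finset (Fin n) → F) :
    ∑ a ∈ s.powerset.filter (j ⊆ ·),
      ∑ b ∈ s.powerset.filter (a ⊆ ·), ((-1 : F) ^ (b \ a).card * g b) = g j := by
  rw [Finset.sum_comm' (t' := s.powerset.filter (j ⊆ ·))
    (s' := fun b => b.powerset.filter (j ⊆ ·)) (by
      intro a b
      simp only [Finset.mem_filter, Finset.mem_powerset]
      constructor
      · rintro ⟨⟨has, hja⟩, hbs, hab⟩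
        exact ⟨⟨hab, hja⟩, hbs, hja.trans hab⟩
      · rintro ⟨⟨hab, hja⟩, hbs, hjb⟩
        exact ⟨⟨hab.trans hbs, hja⟩, hbs, hab⟩)]
  have hinner : ∀ b ∈ s.powerset.filter (j ⊆ ·),
      ∑ a ∈ b.powerset.filter (j ⊆ ·), ((-1 : F) ^ (b \ a).card * g b) =
        (if b = j then 1 else 0) * g b := by
    intro b hb
    rw [Finset.mem_filter, Finset.mem_powerset] at hb
    have hbij : ∑ a ∈ b.powerset.filter (j ⊆ ·), ((-1 : F) ^ (b \ a).card * g b) =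
        ∑ t ∈ (b \ j).powerset, ((-1 : F) ^ t.card * g b) := by
      refine Finset.sum_bij' (fun a _ => b \ a) (fun t _ => b \ t) ?_ ?_ ?_ ?_ ?_
      · intro a ha
        rw [Finset.mem_filter, Finset.mem_powerset] at ha
        rw [Finset.mem_powerset]
        exact Finset.sdiff_subset_sdiff le_rfl ha.2
      · intro t ht
        rw [Finset.mem_powerset] at ht
        rw [Finset.mem_filter, Finset.mem_powerset]
        refine ⟨Finset.sdiff_subset, ?_⟩
        rw [Finset.subset_sdiff]
        refine ⟨hb.2, ?_⟩
        exact Finset.disjoint_left.mpr (fun i hij hit =>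
          (Finset.mem_sdiff.mp (ht hit)).2 hij)
      · intro a ha
        rw [Finset.mem_filter, Finset.mem_powerset] at ha
        exact Finset.sdiff_sdiff_eq_self ha.1
      · intro t ht
        rw [Finset.mem_powerset] at ht
        exact Finset.sdiff_sdiff_eq_self (ht.trans Finset.sdiff_subset)
      · intro a ha; rfl
    rw [hbij, ← Finset.sum_mul]
    congr 1
    have : ∑ t ∈ (b \ j).powerset, ((-1 : F) ^ t.card) =
        (((∑ t ∈ (b \ j).powerset, ((-1 : ℤ) ^ t.card)) : ℤ) : F) := by
      push_cast; rfl
    rw [this, Finset.sum_powerset_neg_one_pow_card]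
    by_cases hbj : b = j
    · rw [if_pos (by rw [hbj]; exact Finset.sdiff_self j), if_pos hbj]; norm_num
    · rw [if_neg ?_, if_neg hbj]
      · norm_num
      · intro hc
        exact hbj (le_antisymm (by
            intro i hib
            by_contra hij
            exact absurd (Finset.mem_sdiff.mpr ⟨hib, hij⟩) (by rw [hc]; exact Finset.notMem_empty i))
          hb.2)
  rw [Finset.sum_congr rfl hinner, Finset.sum_eq_single j]
  · rw [if_pos rfl, one_mul]
  · intro b _ hbj
    rw [if_neg hbj, zero_mul]
  · intro hjmem
    exact absurd (Finset.mem_filter.mpr ⟨Finset.mem_powerset.mpr hj, le_rfl⟩) hjmem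
end Moebius

section Vanish
variable {U : Fin n → Type} [∀ i, Fintype (U i)] [∀ i, DecidableEq (U i)]
variable {F : Type} [Field F]
variable (x₀ : ∀ i, U i)

lemma center_vanish (hU : ∀ i, 2 ≤ Fintype.card (U i))
    (P : Matrix (∀ i, U i) (∀ i, U i) F)
    (hblock : ∀ x y, dis x₀ x ≠ dis x₀ y → P x y = 0)
    (hcomm : ∀ S, P * Amat U F S = Amat U F S * P)
    (htop : ∀ x y, dis x₀ x = Finset.univ → dis x₀ y = Finset.univ → P x y = 0) :
    P = 0 := by
  have key : ∀ m : ℕ, ∀ x y : ∀ i, U i, (Finset.univ \ dis x₀ x).card ≤ m → P x y = 0 := by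
    intro m
    induction m with
    | zero =>
      intro x y hm
      by_cases hxy : dis x₀ x = dis x₀ y
      · have hx : dis x₀ x = Finset.univ := by
          have : Finset.univ \ dis x₀ x = ∅ := Finset.card_eq_zero.mp (Nat.le_zero.mp hm)
          have h2 := Finset.sdiff_eq_empty_iff_subset.mp this
          exact le_antisymm (Finset.subset_univ _) h2
        exact htop x y hx (hxy ▸ hx)
      · exact hblock x y hxy
    | succ m ih =>
      intro x y hm
      by_cases hxy : dis x₀ x = dis x₀ y
      swap
      · exact hblock x y hxy
      by_cases huniv : dis x₀ x = Finset.univ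
      · exact htop x y huniv (hxy ▸ huniv)
      obtain ⟨i₀, hi₀⟩ : ∃ i₀, i₀ ∉ dis x₀ x := by
        by_contra hc
        push_neg at hc
        exact huniv (Finset.eq_univ_iff_forall.mpr hc)
      have hxi₀ : x i₀ = x₀ i₀ := by
        rw [mem_dis] at hi₀; push_neg at hi₀; exact hi₀.symm
      have hyi₀ : y i₀ = x₀ i₀ := by
        have : i₀ ∉ dis x₀ y := hxy ▸ hi₀
        rw [mem_dis] at this; push_neg at this; exact this.symm
      obtain ⟨w, hw⟩ : ∃ w : U i₀, w ≠ x₀ i₀ := by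
        have : Nontrivial (U i₀) := Fintype.one_lt_card_iff_nontrivial.mp
          (by have := hU i₀; omega)
        exact exists_ne (x₀ i₀)
      set y' := Function.update y i₀ w with hy'def
      have hy'i : ∀ i, i ≠ i₀ → y' i = y i := fun i hi => Function.update_of_ne hi _ _
      have hy'i₀ : y' i₀ = w := Function.update_self _ _ _
      have hLHS : (P * Amat U F {i₀}) x y' = P x y := by
        rw [Matrix.mul_apply]
        rw [Finset.sum_eq_single y]
        · rw [Amat_apply, if_pos, mul_one]
          ext i
          rw [mem_dis, Finset.mem_singleton]
          constructor
          · intro hne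
            by_contra hii
            exact hne (hy'i i hii).symm
          · rintro rfl
            rw [hy'i₀, hyi₀]
            exact fun hc => hw hc.symm
        · intro z _ hz
          rw [Amat_apply]
          by_cases hdz : dis z y' = {i₀}
          swap
          · rw [if_neg hdz, mul_zero]
          have hzi : ∀ i, i ≠ i₀ → z i = y i := by
            intro i hi
            have : i ∉ dis z y' := by rw [hdz, Finset.mem_singleton]; exact hi
            rw [mem_dis] at this; push_neg at this
            exact this.trans (hy'i i hi)
          have hzi₀ : z i₀ ≠ x₀ i₀ := by
            intro hc
            apply hz
            funext i
            by_cases hi : i = i₀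
            · rw [hi, hc, hyi₀]
            · exact hzi i hi
          have : dis x₀ x ≠ dis x₀ z := by
            intro hc
            rw [hc, mem_dis] at hi₀
            push_neg at hi₀
            exact hzi₀ hi₀.symm
          rw [hblock x z this, zero_mul]
        · intro hy
          exact absurd (Finset.mem_univ y) hy
      have hRHS : (Amat U F {i₀} * P) x y' = 0 := by
        rw [Matrix.mul_apply]
        apply Finset.sum_eq_zero
        intro z _
        rw [Amat_apply]
        by_cases hdz : dis x z = {i₀}
        swap
        · rw [if_neg hdz, zero_mul]
        have hzi : ∀ i, i ≠ i₀ → z i = x i := by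
          intro i hi
          have : i ∉ dis x z := by rw [hdz, Finset.mem_singleton]; exact hi
          rw [mem_dis] at this; push_neg at this
          exact this.symm
        have hzi₀ : z i₀ ≠ x₀ i₀ := by
          have : i₀ ∈ dis x z := by rw [hdz]; exact Finset.mem_singleton_self i₀
          rw [mem_dis] at this
          intro hc
          exact this (hxi₀.trans hc.symm)
        have hsd : Finset.univ \ dis x₀ z = (Finset.univ \ dis x₀ x).erase i₀ := by
          ext i
          rw [Finset.mem_erase, Finset.mem_sdiff, Finset.mem_sdiff, mem_dis, mem_dis]
          by_cases hi : i = i₀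
          · subst hi
            have hzx : ¬ (x₀ i = z i) := fun hc => hzi₀ hc.symm
            simp [hzx]
          · simp only [Finset.mem_univ, true_and, hi, not_false_iff, and_true]
            rw [hzi i hi]
            tauto
        have hcard : (Finset.univ \ dis x₀ z).card ≤ m := by
          rw [hsd, Finset.card_erase_of_mem (Finset.mem_sdiff.mpr ⟨Finset.mem_univ _, hi₀⟩)]
          omega
        rw [ih z y' hcard, mul_zero]
      rw [← hLHS, hcomm {i₀}, hRHS]
  ext x y
  exact key (Finset.univ \ dis x₀ x).card x y le_rfl
end Vanish

/-- The `C_a` with `a ⊆ Ω°` form an `F`-basis of the center `Z(T)` of the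
Terwilliger algebra; in particular `dim_F Z(T) = 2 ^ n₂`. -/
theorem stmt6 (hn : 1 ≤ n) (hU : ∀ i, 2 ≤ Fintype.card (U i)) (x₀ : ∀ i, U i) :
    (∃ b : Module.Basis {a : Finset (Fin n) // a ⊆ circ U Finset.univ} F
        (Subalgebra.center F (Tw U F x₀)),
      ∀ a, (((b a : Subalgebra.center F (Tw U F x₀)) : Tw U F x₀) :
          Matrix (∀ i, U i) (∀ i, U i) F) = Cmat U F x₀ a) ∧
    Module.finrank F (Subalgebra.center F (Tw U F x₀)) = 2 ^ nTwo U := by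
  classical
  obtain ⟨u, v, hu, hv⟩ := exists_uv x₀ hU
  set X : Finset (Fin n) → (∀ i, U i) := fun h => fun i => if i ∈ h then u i else x₀ i with hX
  set Y : Finset (Fin n) → Finset (Fin n) → (∀ i, U i) :=
    fun h j => fun i => if i ∈ j then v i else if i ∈ h then u i else x₀ i with hY
  have hrep : ∀ h j, j ⊆ circ U h →
      dis x₀ (X h) = h ∧ dis x₀ (Y h j) = h ∧ dis (X h) (Y h j) = j :=
    fun h j hj => rep_dis x₀ u v hu hv h j hj
  have hval_top : ∀ a : Finset (Fin n), ((val U (a \ Finset.univ) : ℕ) : F) = 1 := by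
    intro a
    rw [show a \ Finset.univ = ∅ from
      Finset.sdiff_eq_empty_iff_subset.mpr (Finset.subset_univ a)]
    rw [show _root_.val U (∅ : Finset (Fin n)) = 1 from Finset.prod_empty, Nat.cast_one]
  -- centrality of the Cmat's
  have hCentral : ∀ a : Finset (Fin n), ∀ N ∈ Tw U F x₀,
      Cmat U F x₀ a * N = N * Cmat U F x₀ a := by
    intro a N hN
    induction hN using Algebra.adjoin_induction with
    | mem N' hN' =>
      rcases hN' with ⟨S, rfl⟩ | ⟨S, rfl⟩
      · exact Cmat_comm_Amat x₀ a S
      · exact Cmat_comm_Emat x₀ a S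
    | algebraMap r =>
      rw [Algebra.commutes r (Cmat U F x₀ a)]
    | add N1 N2 h1 h2 ih1 ih2 =>
      rw [mul_add, add_mul, ih1, ih2]
    | mul N1 N2 h1 h2 ih1 ih2 =>
      rw [← mul_assoc, ih1, mul_assoc, ih2, ← mul_assoc]
  set Cc : {a : Finset (Fin n) // a ⊆ circ U Finset.univ} →
      Subalgebra.center F (Tw U F x₀) :=
    fun a => ⟨⟨Cmat U F x₀ a.1, Cmat_mem_Tw x₀ a.1⟩, by
      rw [Subalgebra.mem_center_iff]
      intro b
      apply Subtype.ext
      exact (hCentral a.1 b.1 b.2).symm⟩ with hCc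
  -- matrix-level linear independence
  have hmat_indep : LinearIndependent F
      (fun a : {a : Finset (Fin n) // a ⊆ circ U Finset.univ} => Cmat U F x₀ a.1) := by
    rw [Fintype.linearIndependent_iff]
    intro g hg
    have hsum : ∀ j, j ⊆ circ U Finset.univ →
        ∑ a : {a : Finset (Fin n) // a ⊆ circ U Finset.univ},
          (if j ⊆ a.1 then g a else 0) = 0 := by
      intro j hj
      obtain ⟨hdx, hdy, hdxy⟩ := hrep Finset.univ j hj
      have hent := Matrix.ext_iff.mpr hg (X Finset.univ) (Y Finset.univ j)
      rw [Matrix.sum_apply, Matrix.zero_apply] at hent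
      refine Eq.trans (Finset.sum_congr rfl ?_) hent
      intro a _
      rw [Matrix.smul_apply, Cmat_apply, hdx, hdy, hdxy, Finset.inter_univ, hval_top]
      by_cases hja : j ⊆ a.1 <;> simp [hja]
    intro a₀
    have H : ∀ m : ℕ, ∀ a : {a : Finset (Fin n) // a ⊆ circ U Finset.univ},
        (circ U Finset.univ \ a.1).card ≤ m → g a = 0 := by
      intro m
      induction m with
      | zero =>
        intro a ha
        have h1 := hsum a.1 a.2
        rw [Finset.sum_eq_single a] at h1
        · rwa [if_pos (Finset.Subset.refl _)] at h1
        · intro b _ hba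
          have hac : a.1 = circ U Finset.univ :=
            le_antisymm a.2 (Finset.sdiff_eq_empty_iff_subset.mp
              (Finset.card_eq_zero.mp (Nat.le_zero.mp ha)))
          rw [if_neg ?_]
          intro hab
          have hba1 : (b : Finset (Fin n)) ⊆ a.1 := by rw [hac]; exact b.2
          exact hba (Subtype.ext (le_antisymm hba1 hab))
        · intro hmem; exact absurd (Finset.mem_univ a) hmem
      | succ m ih =>
        intro a ha
        have h1 := hsum a.1 a.2
        rw [Finset.sum_eq_single a] at h1
        · rwa [if_pos (Finset.Subset.refl _)] at h1
        · intro b _ hba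
          by_cases hab : a.1 ⊆ b.1
          · rw [if_pos hab]
            apply ih
            have hne : a.1 ≠ b.1 := fun he => hba (Subtype.ext he.symm)
            have hlt : a.1.card < b.1.card := Finset.card_lt_card ⟨hab, fun h => hne (le_antisymm hab h)⟩
            have hbc : b.1.card ≤ (circ U Finset.univ).card := Finset.card_le_card b.2
            have e1 : (circ U Finset.univ \ a.1).card =
                (circ U Finset.univ).card - a.1.card := Finset.card_sdiff_of_subset a.2
            have e2 : (circ U Finset.univ \ b.1).card =
                (circ U Finset.univ).card - b.1.card := Finset.card_sdiff_of_subset b.2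
            omega
          · rw [if_neg hab]
        · intro hmem; exact absurd (Finset.mem_univ a) hmem
    exact H _ a₀ le_rfl
  -- independence upstairs
  have hindep : LinearIndependent F Cc := by
    apply LinearIndependent.of_comp
      ((Tw U F x₀).val.toLinearMap.comp (Subalgebra.val _).toLinearMap)
    exact hmat_indep
  -- spanning
  have hspan : ∀ Mc : Subalgebra.center F (Tw U F x₀),
      Mc ∈ Submodule.span F (Set.range Cc) := by
    rintro ⟨⟨M, hMT⟩, hMc⟩
    rw [Subalgebra.mem_center_iff] at hMc
    have hMcomm : ∀ N' (_ : N' ∈ Tw U F x₀), M * N' = N' * M := by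
      intro N' hN'
      have h2 := congrArg Subtype.val (hMc ⟨N', hN'⟩)
      exact h2.symm
    have hInv : DisInv x₀ M := disInv_of_mem_Tw x₀ hMT
    have hblock : ∀ x y, dis x₀ x ≠ dis x₀ y → M x y = 0 := by
      intro x y hne
      have hcE := hMcomm (Emat U F x₀ (dis x₀ y))
        (Algebra.subset_adjoin (Or.inr ⟨_, rfl⟩))
      have hent : (M * Emat U F x₀ (dis x₀ y)) x y =
          (Emat U F x₀ (dis x₀ y) * M) x y := by rw [hcE]
      unfold Emat at hent
      rw [Matrix.mul_diagonal, Matrix.diagonal_mul, if_pos rfl, if_neg hne,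
        mul_one, zero_mul] at hent
      exact hent
    set f : Finset (Fin n) → Finset (Fin n) → F := fun h j => M (X h) (Y h j) with hf
    have hfM : ∀ x y, dis x₀ x = dis x₀ y → M x y = f (dis x₀ x) (dis x y) := by
      intro x y hxy
      obtain ⟨h1, h2, h3⟩ := hrep (dis x₀ x) (dis x y) (dis_subset_circ x₀ hxy)
      exact hInv x y _ _ h1.symm (hxy.symm.trans h2.symm) h3.symm
    set c : Finset (Fin n) → F := fun a =>
      ∑ b ∈ (circ U Finset.univ).powerset.filter (a ⊆ ·),
        ((-1 : F) ^ (b \ a).card * f Finset.univ b) with hc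
    set N : Matrix (∀ i, U i) (∀ i, U i) F :=
      ∑ a ∈ (circ U Finset.univ).powerset, c a • Cmat U F x₀ a with hNdef
    have hNblock : ∀ x y, dis x₀ x ≠ dis x₀ y → N x y = 0 := by
      intro x y hne
      rw [hNdef, Matrix.sum_apply]
      apply Finset.sum_eq_zero
      intro a _
      rw [Matrix.smul_apply, Cmat_apply, if_neg (fun cc => hne cc.1), smul_zero]
    have hNcomm : ∀ S, N * Amat U F S = Amat U F S * N := by
      intro S
      rw [hNdef, Finset.sum_mul, Finset.mul_sum]
      refine Finset.sum_congr rfl (fun a _ => ?_)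
      rw [smul_mul_assoc, mul_smul_comm, Cmat_comm_Amat]
    have hMcommA : ∀ S, M * Amat U F S = Amat U F S * M :=
      fun S => hMcomm _ (Algebra.subset_adjoin (Or.inl ⟨S, rfl⟩))
    have htopMN : ∀ x y, dis x₀ x = Finset.univ → dis x₀ y = Finset.univ →
        (M - N) x y = 0 := by
      intro x y hx hy
      have hxy : dis x₀ x = dis x₀ y := hx.trans hy.symm
      have hjc : dis x y ⊆ circ U Finset.univ := hx ▸ dis_subset_circ x₀ hxy
      have hMxy : M x y = f Finset.univ (dis x y) := by
        rw [hfM x y hxy, hx]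
      have hNxy : N x y = f Finset.univ (dis x y) := by
        rw [hNdef, Matrix.sum_apply]
        have hterm : ∀ a ∈ (circ U Finset.univ).powerset,
            (c a • Cmat U F x₀ a) x y = if dis x y ⊆ a then c a else 0 := by
          intro a _
          rw [Matrix.smul_apply, Cmat_apply, hx, hxy.symm.trans hx, Finset.inter_univ,
            hval_top]
          by_cases hja : dis x y ⊆ a <;> simp [hja]
        rw [Finset.sum_congr rfl hterm, ← Finset.sum_filter]
        exact moebius_sum (circ U Finset.univ) (dis x y) hjc (f Finset.univ)
      rw [Matrix.sub_apply, hMxy, hNxy, sub_self]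
    have hzero : M - N = 0 := by
      apply center_vanish x₀ hU
      · intro x y hne
        rw [Matrix.sub_apply, hblock x y hne, hNblock x y hne, sub_self]
      · intro S
        rw [sub_mul, mul_sub, hMcommA S, hNcomm S]
      · exact htopMN
    have hMN : M = N := sub_eq_zero.mp hzero
    have hNsub : N = ∑ a : {a : Finset (Fin n) // a ⊆ circ U Finset.univ},
        c a.1 • Cmat U F x₀ a.1 := by
      rw [hNdef]
      exact Finset.sum_subtype _ (fun a => Finset.mem_powerset) _
    have key : ∀ (hx : (⟨M, hMT⟩ : Tw U F x₀) ∈ Subalgebra.center F (Tw U F x₀)),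
        (⟨⟨M, hMT⟩, hx⟩ : Subalgebra.center F (Tw U F x₀)) ∈
          Submodule.span F (Set.range Cc) := by
      intro hx
      have heq : (⟨⟨M, hMT⟩, hx⟩ : Subalgebra.center F (Tw U F x₀)) =
          ∑ a : {a : Finset (Fin n) // a ⊆ circ U Finset.univ}, c a.1 • Cc a := by
        apply Subtype.ext
        apply Subtype.ext
        show M = ((Tw U F x₀).val.toLinearMap.comp
            (Subalgebra.val _).toLinearMap)
          (∑ a : {a : Finset (Fin n) // a ⊆ circ U Finset.univ}, c a.1 • Cc a)
        rw [map_sum, hMN, hNsub]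
        exact Finset.sum_congr rfl (fun a _ => by rw [_root_.map_smul]; rfl)
      rw [heq]
      exact Submodule.sum_mem _
        (fun a _ => Submodule.smul_mem _ _ (Submodule.subset_span ⟨a, rfl⟩))
    exact key _
  have hspan_top : ⊤ ≤ Submodule.span F (Set.range Cc) := fun mc _ => hspan mc
  refine ⟨⟨Module.Basis.mk hindep hspan_top, ?_⟩, ?_⟩
  · intro a
    rw [show Module.Basis.mk hindep hspan_top a = Cc a from Module.Basis.mk_apply hindep hspan_top a]
  · rw [Module.finrank_eq_card_basis (Module.Basis.mk hindep hspan_top), Fintype.card_subtype]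
    rw [show Finset.univ.filter (fun a : Finset (Fin n) => a ⊆ circ U Finset.univ)
        = (circ U Finset.univ).powerset from by ext a; simp [Finset.mem_powerset],
      Finset.card_powerset]
    rfl

end
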